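/- For every integer l ≥ 3, the symmetric group S_l on l letters is unround: it is not k-round for any integer k ≥ 2. -/

import Mathlib

/-- A cycle of length `n = Nat.card G` over `G` is a function `ZMod n → G`.
It is `k`-round if for all integers `m₁, …, m_k`, the map
`i ↦ g (i+m₁) * g (i+m₂) * ⋯ * g (i+m_k)` is a bijection from `ZMod n` to `G`. -/
def IsRoundCycle (G : Type*) [Group G] (k : ℕ) (g : ZMod (Nat.card G) → G) : Prop :=
  ∀ m : Fin k → ℤ,
    Function.Bijective fun i : ZMod (Nat.card G) =>
      (List.ofFn fun j : Fin k => g (i + (m j : ZMod (Nat.card G)))).prod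

/-- `G` is `k`-round if it admits a `k`-round cycle. -/
def IsKRound (G : Type*) [Group G] (k : ℕ) : Prop :=
  ∃ g : ZMod (Nat.card G) → G, IsRoundCycle G k g

/-- A cycle is totally round if it is `k`-round for every `k ≥ 1` with `gcd(k, n) = 1`. -/
def IsTotallyRoundCycle (G : Type*) [Group G] (g : ZMod (Nat.card G) → G) : Prop :=
  ∀ k : ℕ, 1 ≤ k → Nat.gcd k (Nat.card G) = 1 → IsRoundCycle G k g

/-- `G` is round if it admits a totally round cycle. -/
def IsRound (G : Type*) [Group G] : Prop :=
  ∃ g : ZMod (Nat.card G) → G, IsTotallyRoundCycle G g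

open Finset

lemma ofFn_ite_prod {M : Type*} [Monoid M] (x y : M) :
    ∀ (k s : ℕ), s ≤ k →
      (List.ofFn fun j : Fin k => if (j : ℕ) < s then x else y).prod = x ^ s * y ^ (k - s)
  | k, 0, _ => by simp
  | (k+1), (t+1), h => by
      rw [List.ofFn_succ, List.prod_cons]
      have htail : (fun i : Fin k => if ((i.succ : Fin (k+1)) : ℕ) < t + 1 then x else y)
           = fun i : Fin k => if (i : ℕ) < t then x else y := by
        funext i; simp [Fin.val_succ, Nat.succ_lt_succ_iff]
      rw [show (((0 : Fin (k+1)) : ℕ)) = 0 from rfl, if_pos (Nat.succ_pos t), htail,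
        ofFn_ite_prod x y k t (Nat.succ_le_succ_iff.mp h), Nat.succ_sub_succ,
        ← mul_assoc, ← pow_succ']

namespace St15

variable {l : ℕ}

/-- The number of permutations `x` of `Fin l` with `x^b q = p`. -/
def W (b : ℕ) (q p : Fin l) : ℕ :=
  (univ.filter fun x : Equiv.Perm (Fin l) => (x ^ b) q = p).card

lemma sum_W (b : ℕ) (p : Fin l) : ∑ q, W b q p = l.factorial := by
  classical
  have h := Finset.card_eq_sum_card_fiberwise
    (f := fun x : Equiv.Perm (Fin l) => (x ^ b)⁻¹ p) (s := univ) (t := univ) (fun x _ => mem_univ _)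
  rw [card_univ, Fintype.card_perm, Fintype.card_fin] at h
  rw [h]
  apply Finset.sum_congr rfl
  intro q _
  unfold W
  congr 1
  apply Finset.filter_congr
  intro x _
  constructor
  · intro hx; rw [← hx]; simp
  · intro hx; subst hx; simp

lemma W_eq (b : ℕ) {p q q' : Fin l} (hq : q ≠ p) (hq' : q' ≠ p) : W b q p = W b q' p := by
  classical
  unfold W
  apply Finset.card_bij' (i := fun x _ => (Equiv.swap q q') * x * (Equiv.swap q q')⁻¹)
    (j := fun x _ => (Equiv.swap q q')⁻¹ * x * (Equiv.swap q q'))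
  · intro a ha
    rw [mem_filter] at ha ⊢
    refine ⟨mem_univ _, ?_⟩
    rw [conj_pow]
    simp only [Equiv.Perm.mul_apply, Equiv.swap_inv]
    rw [Equiv.swap_apply_right, ha.2, Equiv.swap_apply_of_ne_of_ne (Ne.symm hq) (Ne.symm hq')]
  · intro a ha
    rw [mem_filter] at ha ⊢
    refine ⟨mem_univ _, ?_⟩
    rw [show (Equiv.swap q q')⁻¹ * a * (Equiv.swap q q')
        = (Equiv.swap q q')⁻¹ * a * ((Equiv.swap q q')⁻¹)⁻¹ by rw [inv_inv], conj_pow]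
    simp only [Equiv.Perm.mul_apply, Equiv.swap_inv, inv_inv]
    rw [Equiv.swap_apply_left, ha.2, Equiv.swap_apply_of_ne_of_ne (Ne.symm hq) (Ne.symm hq')]
  · intro a _; group
  · intro a _; group

lemma stab_card (hl : 0 < l) (p : Fin l) : W 1 p p = (l-1).factorial := by
  classical
  have h := Finset.card_eq_sum_card_fiberwise
    (f := fun x : Equiv.Perm (Fin l) => x p) (s := univ) (t := univ) (fun x _ => mem_univ _)
  rw [card_univ, Fintype.card_perm, Fintype.card_fin] at h
  have hconst : ∀ y : Fin l, (univ.filter fun x : Equiv.Perm (Fin l) => x p = y).card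
      = (univ.filter fun x : Equiv.Perm (Fin l) => x p = p).card := by
    intro y
    apply Finset.card_bij' (i := fun x _ => (Equiv.swap y p) * x)
      (j := fun x _ => (Equiv.swap y p) * x)
    · intro a ha; rw [mem_filter] at ha ⊢
      exact ⟨mem_univ _, by rw [Equiv.Perm.mul_apply, ha.2, Equiv.swap_apply_left]⟩
    · intro a ha; rw [mem_filter] at ha ⊢
      exact ⟨mem_univ _, by rw [Equiv.Perm.mul_apply, ha.2, Equiv.swap_apply_right]⟩
    · intro a _; simp [← mul_assoc]
    · intro a _; simp [← mul_assoc]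
  rw [Finset.sum_congr rfl (fun y _ => hconst y), Finset.sum_const, card_univ,
    Fintype.card_fin, smul_eq_mul] at h
  have hW : W 1 p p = (univ.filter fun x : Equiv.Perm (Fin l) => x p = p).card := by
    unfold W; simp
  rw [hW]
  have h2 := Nat.mul_factorial_pred hl.ne'
  rw [← h2] at h
  exact Nat.eq_of_mul_eq_mul_left hl h.symm

/-- Generic lower bound on `W b p p` given a witness moving `p` whose `b`-th power fixes `p`. -/
lemma W_lower (hl : 0 < l) (b : ℕ) (p : Fin l) (ξ : Equiv.Perm (Fin l))
    (h1 : (ξ ^ b) p = p) (h2 : ξ p ≠ p) : (l-1).factorial + 1 ≤ W b p p := by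
  classical
  have hsub : insert ξ (univ.filter fun x : Equiv.Perm (Fin l) => x p = p)
      ⊆ (univ.filter fun x : Equiv.Perm (Fin l) => (x ^ b) p = p) := by
    intro x hx
    rw [Finset.mem_insert] at hx
    rw [mem_filter]
    rcases hx with rfl | hx
    · exact ⟨mem_univ _, h1⟩
    · rw [mem_filter] at hx
      exact ⟨mem_univ _, Function.IsFixedPt.perm_pow hx.2 b⟩
  have hcard := Finset.card_le_card hsub
  rw [Finset.card_insert_of_notMem (by simp [h2])] at hcard
  have hst : (univ.filter fun x : Equiv.Perm (Fin l) => x p = p).card = (l-1).factorial := by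
    rw [← stab_card hl p]; unfold W; simp
  rw [hst] at hcard
  exact hcard

lemma W_lower_even (hl : 1 < l) {b : ℕ} (hb : Even b) (p : Fin l) :
    (l-1).factorial + 1 ≤ W b p p := by
  obtain ⟨q, hq⟩ := Fintype.exists_ne_of_one_lt_card (by simpa using hl) p
  apply W_lower (by omega) b p (Equiv.swap p q)
  · obtain ⟨c, hc⟩ := hb
    rw [show b = 2 * c by omega, pow_mul, sq, Equiv.swap_mul_self, one_pow]
    rfl
  · rw [Equiv.swap_apply_left]; exact hq

lemma W_lower_three (hl : 3 ≤ l) (p : Fin l) :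
    (l-1).factorial + 1 ≤ W 3 p p := by
  classical
  have hcard : 1 < ((univ : Finset (Fin l)).erase p).card := by
    rw [Finset.card_erase_of_mem (mem_univ _), card_univ, Fintype.card_fin]; omega
  obtain ⟨q, hqmem, s, hsmem, hqs⟩ := Finset.one_lt_card.mp hcard
  have hqp : q ≠ p := Finset.ne_of_mem_erase hqmem
  have hsp : s ≠ p := Finset.ne_of_mem_erase hsmem
  set ξ := Equiv.swap p q * Equiv.swap q s with hξ
  have hxp : ξ p = q := by
    rw [hξ, Equiv.Perm.mul_apply, Equiv.swap_apply_of_ne_of_ne (Ne.symm hqp) (Ne.symm hsp),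
      Equiv.swap_apply_left]
  have hxq : ξ q = s := by
    rw [hξ, Equiv.Perm.mul_apply, Equiv.swap_apply_left,
      Equiv.swap_apply_of_ne_of_ne hsp (Ne.symm hqs)]
  have hxs : ξ s = p := by
    rw [hξ, Equiv.Perm.mul_apply, Equiv.swap_apply_right, Equiv.swap_apply_right]
  apply W_lower (by omega) 3 p ξ
  · rw [show (3:ℕ) = 2 + 1 by rfl, pow_succ, Equiv.Perm.mul_apply, hxp, sq,
      Equiv.Perm.mul_apply, hxq, hxs]
  · rw [hxp]; exact hqp

/-- The number of fixed points of a permutation. -/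
def fixc (σ : Equiv.Perm (Fin l)) : ℕ := (univ.filter fun p => σ p = p).card

lemma sum_fixc (hl : 0 < l) : ∑ σ : Equiv.Perm (Fin l), fixc σ = l.factorial := by
  classical
  unfold fixc
  rw [show ∑ σ : Equiv.Perm (Fin l), (univ.filter fun p => σ p = p).card
      = ∑ σ : Equiv.Perm (Fin l), ∑ p : Fin l, (if σ p = p then 1 else 0) from
      Finset.sum_congr rfl (fun σ _ => Finset.card_filter _ _), Finset.sum_comm]
  have hrow : ∀ p : Fin l, ∑ σ : Equiv.Perm (Fin l), (if σ p = p then 1 else 0)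
      = (l-1).factorial := by
    intro p
    rw [← Finset.card_filter, ← stab_card hl p]
    unfold W; simp
  rw [Finset.sum_congr rfl (fun p _ => hrow p), Finset.sum_const, card_univ, Fintype.card_fin,
    smul_eq_mul, Nat.mul_factorial_pred hl.ne']

set_option maxHeartbeats 1600000 in
lemma per_p (hl : 3 ≤ l) (b r : ℕ) (hb : Even b) (hr : r = 2 ∨ r = 3) (p : Fin l) :
    (l-1).factorial * l.factorial < ∑ y : Equiv.Perm (Fin l), W b ((y^r) p) p := by
  classical
  obtain ⟨q₀, hq₀⟩ := Fintype.exists_ne_of_one_lt_card (by simp; omega) p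
  set A := W b p p with hA
  set B := W b q₀ p with hB
  set C := W r p p with hC
  have hCeq : C = (univ.filter fun y : Equiv.Perm (Fin l) => (y^r) p = p).card := rfl
  have hsplit : ∑ y : Equiv.Perm (Fin l), W b ((y^r) p) p = C * A + (l.factorial - C) * B := by
    rw [← Finset.sum_filter_add_sum_filter_not univ (fun y : Equiv.Perm (Fin l) => (y^r) p = p)]
    have e1 : ∑ y ∈ univ.filter (fun y : Equiv.Perm (Fin l) => (y^r) p = p),
        W b ((y^r) p) p = C * A := by
      rw [Finset.sum_congr rfl (fun y hy => by rw [(mem_filter.mp hy).2]), Finset.sum_const,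
        smul_eq_mul, hCeq]
    have e2 : ∑ y ∈ univ.filter (fun y : Equiv.Perm (Fin l) => ¬ (y^r) p = p),
        W b ((y^r) p) p = (l.factorial - C) * B := by
      rw [Finset.sum_congr rfl (fun y hy => W_eq b (mem_filter.mp hy).2 hq₀), Finset.sum_const,
        smul_eq_mul]
      congr 1
      have := Finset.card_filter_add_card_filter_not
        (s := univ) (p := fun y : Equiv.Perm (Fin l) => (y^r) p = p)
      rw [card_univ, Fintype.card_perm, Fintype.card_fin] at this
      simp only [ne_eq] at this ⊢
      omega
    rw [e1, e2]
  have hAB : A + (l-1) * B = l.factorial := by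
    have hsum := sum_W b p
    rw [← Finset.add_sum_erase _ _ (mem_univ p)] at hsum
    rw [Finset.sum_congr rfl (fun q hq => W_eq b (Finset.ne_of_mem_erase hq) hq₀),
      Finset.sum_const, Finset.card_erase_of_mem (mem_univ _), card_univ, Fintype.card_fin,
      smul_eq_mul] at hsum
    exact hsum
  have hAlb : (l-1).factorial + 1 ≤ A := W_lower_even (by omega) hb p
  have hClb : (l-1).factorial + 1 ≤ C := by
    rcases hr with rfl | rfl
    · exact W_lower_even (by omega) (by decide) p
    · exact W_lower_three hl p
  have hCub : C ≤ l.factorial := by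
    rw [hCeq]
    calc (univ.filter fun y : Equiv.Perm (Fin l) => (y^r) p = p).card
        ≤ (univ : Finset (Equiv.Perm (Fin l))).card := Finset.card_le_card (filter_subset _ _)
      _ = l.factorial := by rw [card_univ, Fintype.card_perm, Fintype.card_fin]
  rw [hsplit]
  have hfl : l.factorial = l * (l-1).factorial := (Nat.mul_factorial_pred (by omega)).symm
  zify [hCub]
  zify [show 1 ≤ l by omega] at hAB
  have hl3 : (3:ℤ) ≤ (l:ℤ) := by exact_mod_cast hl
  have hflz : (l.factorial:ℤ) = (l:ℤ) * ((l-1).factorial:ℤ) := by exact_mod_cast hfl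
  have hA' : ((l-1).factorial:ℤ) + 1 ≤ (A:ℤ) := by exact_mod_cast hAlb
  have hC' : ((l-1).factorial:ℤ) + 1 ≤ (C:ℤ) := by exact_mod_cast hClb
  have hB' : (0:ℤ) ≤ (B:ℤ) := Int.natCast_nonneg B
  have hlnn : (0:ℤ) ≤ (l:ℤ) := by linarith
  have keyA : (l:ℤ) ≤ (l:ℤ)*(A:ℤ) - (l.factorial:ℤ) := by
    have := mul_le_mul_of_nonneg_left hA' hlnn
    nlinarith [this]
  have keyC : (l:ℤ) ≤ (l:ℤ)*(C:ℤ) - (l.factorial:ℤ) := by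
    have := mul_le_mul_of_nonneg_left hC' hlnn
    nlinarith [this]
  have keyP : (l:ℤ)*(l:ℤ) ≤ ((l:ℤ)*(A:ℤ) - (l.factorial:ℤ))*((l:ℤ)*(C:ℤ) - (l.factorial:ℤ)) :=
    mul_le_mul keyA keyC hlnn (by linarith)
  have e : (l:ℤ)*((l:ℤ)-1)*((C:ℤ)*(A:ℤ) + ((l.factorial:ℤ)-(C:ℤ))*(B:ℤ))
      = ((l:ℤ)*(A:ℤ) - (l.factorial:ℤ))*((l:ℤ)*(C:ℤ) - (l.factorial:ℤ))
        + ((l:ℤ)-1)*(l.factorial:ℤ)*(l.factorial:ℤ) := by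
    linear_combination ((l:ℤ)*((l.factorial:ℤ) - (C:ℤ))) * hAB
  have hq : (l:ℤ)*((l:ℤ)-1)*(((l-1).factorial:ℤ)*(l.factorial:ℤ))
      = ((l:ℤ)-1)*(l.factorial:ℤ)*(l.factorial:ℤ) := by rw [hflz]; ring
  have h1 : (l:ℤ)*((l:ℤ)-1)*(((l-1).factorial:ℤ)*(l.factorial:ℤ))
      < (l:ℤ)*((l:ℤ)-1)*((C:ℤ)*(A:ℤ) + ((l.factorial:ℤ)-(C:ℤ))*(B:ℤ)) := by
    have hll : (0:ℤ) < (l:ℤ)*(l:ℤ) := by nlinarith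
    linarith [e, keyP, hq]
  have hpos : (0:ℤ) < (l:ℤ)*((l:ℤ)-1) := by nlinarith
  have := lt_of_mul_lt_mul_left h1 (le_of_lt hpos)
  linarith [this]

end St15

/-- For every `l ≥ 3`, the symmetric group `S_l` is unround: it is not `k`-round for
any `k ≥ 2`. -/
theorem statement15 (l : ℕ) (hl : 3 ≤ l) :
    ∀ k : ℕ, 2 ≤ k → ¬ IsKRound (Equiv.Perm (Fin l)) k := by
  classical
  intro k hk hround
  obtain ⟨g, hg⟩ := hround
  have hl0 : 0 < l := by omega
  have hn : Nat.card (Equiv.Perm (Fin l)) = l.factorial := by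
    rw [Nat.card_eq_fintype_card, Fintype.card_perm, Fintype.card_fin]
  haveI : NeZero (Nat.card (Equiv.Perm (Fin l))) := ⟨by rw [hn]; exact Nat.factorial_ne_zero l⟩
  -- choose the exponents
  set r : ℕ := if Even k then 2 else 3 with hrdef
  have hr23 : r = 2 ∨ r = 3 := by
    rw [hrdef]; split_ifs <;> simp
  have hrk : r ≤ k := by
    rcases Nat.even_or_odd k with he | ho
    · rw [hrdef, if_pos he]; omega
    · rw [hrdef, if_neg (by simp [Nat.even_iff, Nat.odd_iff.mp ho])]
      obtain ⟨c, hc⟩ := ho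
      omega
  set b : ℕ := k - r with hbdef
  have hbr : b + r = k := by omega
  have hbeven : Even b := by
    rw [hbdef, Nat.even_sub hrk]
    rcases Nat.even_or_odd k with he | ho
    · have : r = 2 := by rw [hrdef, if_pos he]
      simp [he, this]
    · have hr3 : r = 3 := by rw [hrdef, if_neg (by simp [Nat.even_iff, Nat.odd_iff.mp ho])]
      have hko := Nat.odd_iff.mp ho
      constructor
      · intro h2; rw [Nat.even_iff] at h2; omega
      · intro h2; rw [hr3] at h2; exact absurd h2 (by decide)
  -- g's k-th power cycle is bijective, hence g is bijective
  have h0 := hg (fun _ => (0:ℤ))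
  simp only [Int.cast_zero, add_zero, List.ofFn_const, List.prod_replicate] at h0
  have hginj : Function.Injective g := by
    intro i j hij
    exact h0.injective (by simp only [hij])
  have hgbij : Function.Bijective g := by
    rw [Nat.bijective_iff_injective_and_card]
    exact ⟨hginj, by rw [Nat.card_zmod]⟩
  -- the block-pattern cycles are bijective
  have hfa : ∀ a : ZMod (Nat.card (Equiv.Perm (Fin l))),
      Function.Bijective fun i => (g i)^b * (g (i+a))^r := by
    intro a
    have hm := hg (fun j : Fin k => if (j:ℕ) < b then (0:ℤ) else (a.val : ℤ))
    have hfun : (fun i => (List.ofFn fun j : Fin k =>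
          g (i + (Int.cast (if (j:ℕ) < b then (0:ℤ) else (a.val:ℤ)) : ZMod (Nat.card (Equiv.Perm (Fin l)))))).prod)
        = fun i => (g i)^b * (g (i+a))^r := by
      funext i
      have hfn : (fun j : Fin k =>
            g (i + (Int.cast (if (j:ℕ) < b then (0:ℤ) else (a.val:ℤ)) : ZMod (Nat.card (Equiv.Perm (Fin l))))))
          = fun j : Fin k => if (j:ℕ) < b then g i else g (i + a) := by
        funext j
        split_ifs with hj
        · simp
        · push_cast
          simp [ZMod.natCast_val, ZMod.cast_id]
      rw [hfn, ofFn_ite_prod _ _ k b (by omega), show k - b = r by omega]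
    rwa [hfun] at hm
  -- summing fixed points over the family
  have hsumfix : ∀ a : ZMod (Nat.card (Equiv.Perm (Fin l))),
      ∑ i : ZMod (Nat.card (Equiv.Perm (Fin l))), St15.fixc ((g i)^b * (g (i+a))^r)
        = l.factorial := by
    intro a
    rw [(hfa a).sum_comp St15.fixc, St15.sum_fixc hl0]
  have hEa : ∑ x : Equiv.Perm (Fin l), ∑ y : Equiv.Perm (Fin l), St15.fixc (x^b * y^r)
      = l.factorial * l.factorial := by
    calc ∑ x : Equiv.Perm (Fin l), ∑ y : Equiv.Perm (Fin l), St15.fixc (x^b * y^r)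
        = ∑ i : ZMod (Nat.card (Equiv.Perm (Fin l))), ∑ y : Equiv.Perm (Fin l),
            St15.fixc ((g i)^b * y^r) :=
          (hgbij.sum_comp (fun x => ∑ y : Equiv.Perm (Fin l), St15.fixc (x^b * y^r))).symm
      _ = ∑ i : ZMod (Nat.card (Equiv.Perm (Fin l))), ∑ j : ZMod (Nat.card (Equiv.Perm (Fin l))),
            St15.fixc ((g i)^b * (g j)^r) :=
          Finset.sum_congr rfl (fun i _ =>
            (hgbij.sum_comp (fun y => St15.fixc ((g i)^b * y^r))).symm)
      _ = ∑ i : ZMod (Nat.card (Equiv.Perm (Fin l))), ∑ a : ZMod (Nat.card (Equiv.Perm (Fin l))),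
            St15.fixc ((g i)^b * (g (i+a))^r) :=
          Finset.sum_congr rfl (fun i _ =>
            ((Equiv.addLeft i).bijective.sum_comp (fun j => St15.fixc ((g i)^b * (g j)^r))).symm)
      _ = ∑ a : ZMod (Nat.card (Equiv.Perm (Fin l))), ∑ i : ZMod (Nat.card (Equiv.Perm (Fin l))),
            St15.fixc ((g i)^b * (g (i+a))^r) := Finset.sum_comm
      _ = ∑ _a : ZMod (Nat.card (Equiv.Perm (Fin l))), l.factorial :=
          Finset.sum_congr rfl (fun a _ => hsumfix a)
      _ = l.factorial * l.factorial := by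
          rw [Finset.sum_const, card_univ, ZMod.card, hn, smul_eq_mul]
  -- rewrite the double sum via the counts W
  have hswap : ∑ x : Equiv.Perm (Fin l), ∑ y : Equiv.Perm (Fin l), St15.fixc (x^b * y^r)
      = ∑ p : Fin l, ∑ y : Equiv.Perm (Fin l), St15.W b ((y^r) p) p := by
    calc ∑ x : Equiv.Perm (Fin l), ∑ y : Equiv.Perm (Fin l), St15.fixc (x^b * y^r)
        = ∑ x : Equiv.Perm (Fin l), ∑ y : Equiv.Perm (Fin l), ∑ p : Fin l,
            (if (x^b) ((y^r) p) = p then 1 else 0) := by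
          refine Finset.sum_congr rfl fun x _ => Finset.sum_congr rfl fun y _ => ?_
          rw [St15.fixc, Finset.card_filter]
          exact Finset.sum_congr rfl fun p _ => by rw [Equiv.Perm.mul_apply]
      _ = ∑ x : Equiv.Perm (Fin l), ∑ p : Fin l, ∑ y : Equiv.Perm (Fin l),
            (if (x^b) ((y^r) p) = p then 1 else 0) :=
          Finset.sum_congr rfl (fun x _ => Finset.sum_comm)
      _ = ∑ p : Fin l, ∑ x : Equiv.Perm (Fin l), ∑ y : Equiv.Perm (Fin l),
            (if (x^b) ((y^r) p) = p then 1 else 0) := Finset.sum_comm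
      _ = ∑ p : Fin l, ∑ y : Equiv.Perm (Fin l), ∑ x : Equiv.Perm (Fin l),
            (if (x^b) ((y^r) p) = p then 1 else 0) :=
          Finset.sum_congr rfl (fun p _ => Finset.sum_comm)
      _ = ∑ p : Fin l, ∑ y : Equiv.Perm (Fin l), St15.W b ((y^r) p) p := by
          refine Finset.sum_congr rfl fun p _ => Finset.sum_congr rfl fun y _ => ?_
          rw [St15.W, Finset.card_filter]
  -- contradiction via the per-point lower bound
  haveI : Nonempty (Fin l) := ⟨⟨0, hl0⟩⟩
  have hgt : l.factorial * l.factorial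
      < ∑ p : Fin l, ∑ y : Equiv.Perm (Fin l), St15.W b ((y^r) p) p := by
    have h2 : ∑ _p : Fin l, (l-1).factorial * l.factorial
        < ∑ p : Fin l, ∑ y : Equiv.Perm (Fin l), St15.W b ((y^r) p) p :=
      Finset.sum_lt_sum_of_nonempty Finset.univ_nonempty
        (fun p _ => St15.per_p hl b r hbeven hr23 p)
    calc l.factorial * l.factorial
        = ∑ _p : Fin l, (l-1).factorial * l.factorial := by
          rw [Finset.sum_const, card_univ, Fintype.card_fin, smul_eq_mul, ← mul_assoc,
            Nat.mul_factorial_pred hl0.ne']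
      _ < _ := h2
  rw [hEa, hswap] at *
  omega
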